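/- Let γ > 0, m, n ∈ ℕ*, and for i = 1,…,m let yᵢ ∈ {+1, −1} and aᵢ ∈ ℝⁿ with ‖aᵢ‖₂ = 1. Let M₂ := [y₁a₁ ⋯ y_m a_m]ᵀ ∈ ℝ^{m×n}, 𝒜₂x := M₂x − 1_m (with 1_m the all-ones vector), and Ψ(z) := Σ_{i=1}^m max(0, −zᵢ) for z ∈ ℝᵐ. Then for every x ∈ ℝⁿ, Ψ_{γ^{-1/2}I}(𝒜₂x) = Σ_{i=1}^m (hᵢ)_{γ^{-1/2}I}(x), where hᵢ : ℝⁿ → ℝ, hᵢ(x) := max(0, 1 − yᵢ aᵢᵀ x) is the hinge loss, and for a proper lower-semicontinuous convex function f, f_{γ^{-1/2}I} := f − ⁽γ⁾f. -/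
import Mathlib


open scoped RealInnerProductSpace

noncomputable section

lemma iInf_sum_coord {m : ℕ} (hm : 0 < m) (g : Fin m → ℝ → ℝ) (hg : ∀ i s, 0 ≤ g i s) :
    ⨅ z : EuclideanSpace ℝ (Fin m), ∑ i, g i (z i) = ∑ i, ⨅ s : ℝ, g i s := by
  have bddi : ∀ i, BddBelow (Set.range (g i)) := fun i =>
    ⟨0, by rintro _ ⟨s, rfl⟩; exact hg i s⟩
  have bddZ : BddBelow (Set.range fun z : EuclideanSpace ℝ (Fin m) => ∑ i, g i (z i)) :=
    ⟨0, by rintro _ ⟨z, rfl⟩; exact Finset.sum_nonneg fun i _ => hg i (z i)⟩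
  apply le_antisymm
  · refine le_of_forall_pos_le_add fun ε hε => ?_
    have hεm : 0 < ε / m := div_pos hε (Nat.cast_pos.mpr hm)
    have h : ∀ i, ∃ s, g i s < (⨅ s, g i s) + ε / m := fun i =>
      exists_lt_of_ciInf_lt (lt_add_of_pos_right _ hεm)
    choose s hs using h
    have hM : (m : ℝ) ≠ 0 := Nat.cast_ne_zero.mpr hm.ne'
    calc ⨅ z : EuclideanSpace ℝ (Fin m), ∑ i, g i (z i)
        ≤ ∑ i, g i (s i) := ciInf_le bddZ ((WithLp.equiv 2 (Fin m → ℝ)).symm s)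
      _ ≤ ∑ i, ((⨅ s, g i s) + ε / m) := Finset.sum_le_sum fun i _ => (hs i).le
      _ = (∑ i, ⨅ s, g i s) + ε := by
          rw [Finset.sum_add_distrib, Finset.sum_const, Finset.card_univ, Fintype.card_fin,
            nsmul_eq_mul]
          field_simp
  · exact le_ciInf fun z => Finset.sum_le_sum fun i _ => ciInf_le (bddi i) (z i)

lemma iInf_dir {n : ℕ} (γ : ℝ) (hγ : 0 < γ) (w x : EuclideanSpace ℝ (Fin n))
    (hw : ‖w‖ = 1) (c : ℝ) :
    ⨅ u : EuclideanSpace ℝ (Fin n), (max 0 (-(⟪w, u⟫ - c)) + ‖x - u‖ ^ 2 / (2 * γ))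
      = ⨅ s : ℝ, (max 0 (-s) + (⟪w, x⟫ - c - s) ^ 2 / (2 * γ)) := by
  have h2γ : (0:ℝ) < 2 * γ := by linarith
  have bddU : BddBelow (Set.range fun u : EuclideanSpace ℝ (Fin n) =>
      max 0 (-(⟪w, u⟫ - c)) + ‖x - u‖ ^ 2 / (2 * γ)) :=
    ⟨0, by rintro _ ⟨u, rfl⟩; exact add_nonneg (le_max_left _ _) (div_nonneg (sq_nonneg _) h2γ.le)⟩
  have bddS : BddBelow (Set.range fun s : ℝ =>
      max 0 (-s) + (⟪w, x⟫ - c - s) ^ 2 / (2 * γ)) :=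
    ⟨0, by rintro _ ⟨s, rfl⟩; exact add_nonneg (le_max_left _ _) (div_nonneg (sq_nonneg _) h2γ.le)⟩
  have hww : ⟪w, w⟫ = 1 := by rw [real_inner_self_eq_norm_sq, hw]; norm_num
  apply le_antisymm
  · refine le_ciInf fun s => ?_
    set u : EuclideanSpace ℝ (Fin n) := x + (s - (⟪w, x⟫ - c)) • w with hu
    have h1 : ⟪w, u⟫ - c = s := by
      rw [hu, inner_add_right, real_inner_smul_right, hww]; ring
    have h2 : ‖x - u‖ ^ 2 = (⟪w, x⟫ - c - s) ^ 2 := by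
      have hxu : x - u = (-(s - (⟪w, x⟫ - c))) • w := by
        rw [hu, neg_smul]; abel
      rw [hxu, norm_smul, hw, mul_one, Real.norm_eq_abs, sq_abs]; ring
    calc ⨅ u : EuclideanSpace ℝ (Fin n), (max 0 (-(⟪w, u⟫ - c)) + ‖x - u‖ ^ 2 / (2 * γ))
        ≤ max 0 (-(⟪w, u⟫ - c)) + ‖x - u‖ ^ 2 / (2 * γ) := ciInf_le bddU u
      _ = max 0 (-s) + (⟪w, x⟫ - c - s) ^ 2 / (2 * γ) := by rw [h1, h2]
  · refine le_ciInf fun u => ?_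
    refine (ciInf_le bddS (⟪w, u⟫ - c)).trans ?_
    have hcs : (⟪w, x⟫ - c - (⟪w, u⟫ - c)) ^ 2 ≤ ‖x - u‖ ^ 2 := by
      have h3 : ⟪w, x⟫ - c - (⟪w, u⟫ - c) = ⟪w, x - u⟫ := by
        rw [inner_sub_right]; ring
      rw [h3, ← sq_abs]
      calc |⟪w, x - u⟫| ^ 2 ≤ (‖w‖ * ‖x - u‖) ^ 2 :=
            pow_le_pow_left₀ (abs_nonneg _) (abs_real_inner_le_norm _ _) 2
        _ = ‖x - u‖ ^ 2 := by rw [hw, one_mul]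
    gcongr

theorem me_hinge_decomposition (γ : ℝ) (hγ : 0 < γ) (m n : ℕ) (hm : 0 < m) (hn : 0 < n)
    (y : Fin m → ℝ) (hy : ∀ i, y i = 1 ∨ y i = -1)
    (a : Fin m → EuclideanSpace ℝ (Fin n)) (ha : ∀ i, ‖a i‖ = 1) :
    ∀ x : EuclideanSpace ℝ (Fin n),
      ((∑ i, max 0 (-(y i * ⟪a i, x⟫ - 1))) -
          ⨅ z : EuclideanSpace ℝ (Fin m),
            ((∑ i, max 0 (-(z i))) +
              ‖(WithLp.equiv 2 (Fin m → ℝ)).symm (fun i => y i * ⟪a i, x⟫ - 1) - z‖ ^ 2 /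
                (2 * γ)))
        = ∑ i,
            ((max 0 (1 - y i * ⟪a i, x⟫)) -
              ⨅ u : EuclideanSpace ℝ (Fin n),
                (max 0 (1 - y i * ⟪a i, u⟫) + ‖x - u‖ ^ 2 / (2 * γ))) := by
  intro x
  set t : Fin m → ℝ := fun i => y i * ⟪a i, x⟫ - 1 with ht
  set g : Fin m → ℝ → ℝ := fun i s => max 0 (-s) + (t i - s) ^ 2 / (2 * γ) with hg
  have h2γ : (0:ℝ) < 2 * γ := by linarith
  have hg0 : ∀ i s, 0 ≤ g i s := fun i s =>
    add_nonneg (le_max_left _ _) (div_nonneg (sq_nonneg _) h2γ.le)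
  have hnorm : ∀ z : EuclideanSpace ℝ (Fin m),
      ‖(WithLp.equiv 2 (Fin m → ℝ)).symm t - z‖ ^ 2 = ∑ i, (t i - z i) ^ 2 := by
    intro z
    rw [EuclideanSpace.norm_eq, Real.sq_sqrt (Finset.sum_nonneg fun i _ => sq_nonneg _)]
    congr 1; ext i
    simp [Real.norm_eq_abs, sq_abs]
  have hL : (⨅ z : EuclideanSpace ℝ (Fin m),
      ((∑ i, max 0 (-(z i))) + ‖(WithLp.equiv 2 (Fin m → ℝ)).symm t - z‖ ^ 2 / (2 * γ)))
      = ∑ i, ⨅ s : ℝ, g i s := by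
    rw [← iInf_sum_coord hm g hg0]
    refine iInf_congr fun z => ?_
    rw [hnorm z, Finset.sum_div, ← Finset.sum_add_distrib]
  have hR : ∀ i, (⨅ u : EuclideanSpace ℝ (Fin n),
      (max 0 (1 - y i * ⟪a i, u⟫) + ‖x - u‖ ^ 2 / (2 * γ))) = ⨅ s : ℝ, g i s := by
    intro i
    have hwn : ‖y i • a i‖ = 1 := by
      rw [norm_smul, ha i, mul_one, Real.norm_eq_abs]
      rcases hy i with h | h <;> rw [h] <;> norm_num
    have key := iInf_dir γ hγ (y i • a i) x hwn 1
    have h1 : ∀ u : EuclideanSpace ℝ (Fin n),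
        max 0 (1 - y i * ⟪a i, u⟫) = max 0 (-(⟪y i • a i, u⟫ - 1)) := by
      intro u; rw [real_inner_smul_left]; ring_nf
    have h2 : ⟪y i • a i, x⟫ - 1 = t i := by rw [real_inner_smul_left, ht]
    calc (⨅ u : EuclideanSpace ℝ (Fin n),
          (max 0 (1 - y i * ⟪a i, u⟫) + ‖x - u‖ ^ 2 / (2 * γ)))
        = ⨅ u : EuclideanSpace ℝ (Fin n),
            (max 0 (-(⟪y i • a i, u⟫ - 1)) + ‖x - u‖ ^ 2 / (2 * γ)) :=
          iInf_congr fun u => by rw [h1 u]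
      _ = ⨅ s : ℝ, (max 0 (-s) + (⟪y i • a i, x⟫ - 1 - s) ^ 2 / (2 * γ)) := key
      _ = ⨅ s : ℝ, g i s := iInf_congr fun s => by rw [hg]; simp only; rw [h2]
  calc ((∑ i, max 0 (-(t i))) -
        ⨅ z : EuclideanSpace ℝ (Fin m),
          ((∑ i, max 0 (-(z i))) + ‖(WithLp.equiv 2 (Fin m → ℝ)).symm t - z‖ ^ 2 / (2 * γ)))
      = (∑ i, max 0 (-(t i))) - ∑ i, ⨅ s : ℝ, g i s := by rw [hL]
    _ = ∑ i, (max 0 (-(t i)) - ⨅ s : ℝ, g i s) := by rw [Finset.sum_sub_distrib]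
    _ = ∑ i, ((max 0 (1 - y i * ⟪a i, x⟫)) -
          ⨅ u : EuclideanSpace ℝ (Fin n),
            (max 0 (1 - y i * ⟪a i, u⟫) + ‖x - u‖ ^ 2 / (2 * γ))) := by
        refine Finset.sum_congr rfl fun i _ => ?_
        rw [hR i]
        congr 1
        rw [ht]; ring_nf
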